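/- For every even integer k > 0 and every prime p, if p - 1 divides k then B_k + 1/p is a p-adic integer (lies in Z_{(p)}), and if p - 1 does not divide k then B_k is a p-adic integer. -/

import Mathlib

open Finset

private def IsPI (p : ℕ) (q : ℚ) : Prop := ∃ a b : ℤ, ¬ (p : ℤ) ∣ b ∧ q * b = a

private lemma isPI_intCast {p : ℕ} (hp : p.Prime) (z : ℤ) : IsPI p (z : ℚ) :=
  ⟨z, 1, by
    simpa using fun h => hp.one_lt.ne'
      (by exact_mod_cast Int.eq_one_of_dvd_one (by norm_num) h), by norm_num⟩

private lemma isPI_zero {p : ℕ} (hp : p.Prime) : IsPI p 0 := by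
  simpa using isPI_intCast hp 0

private lemma isPI_natCast {p : ℕ} (hp : p.Prime) (n : ℕ) : IsPI p (n : ℚ) := by
  simpa using isPI_intCast hp n

private lemma isPI_neg {p : ℕ} {q : ℚ} (h : IsPI p q) : IsPI p (-q) := by
  obtain ⟨a, b, hb, hab⟩ := h
  exact ⟨-a, b, hb, by push_cast; rw [neg_mul, hab]⟩

private lemma isPI_add {p : ℕ} (hp : p.Prime) {q r : ℚ} (hq : IsPI p q) (hr : IsPI p r) :
    IsPI p (q + r) := by
  obtain ⟨a, b, hb, hab⟩ := hq
  obtain ⟨c, d, hd, hcd⟩ := hr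
  refine ⟨a * d + c * b, b * d, fun h => ?_, ?_⟩
  · rcases (Int.Prime.dvd_mul' (by exact_mod_cast hp) h) with h1 | h1
    exacts [hb h1, hd h1]
  · push_cast
    calc (q + r) * (b * d) = (q * b) * d + (r * d) * b := by ring
    _ = (a : ℚ) * d + c * b := by rw [hab, hcd]

private lemma isPI_mul {p : ℕ} (hp : p.Prime) {q r : ℚ} (hq : IsPI p q) (hr : IsPI p r) :
    IsPI p (q * r) := by
  obtain ⟨a, b, hb, hab⟩ := hq
  obtain ⟨c, d, hd, hcd⟩ := hr
  refine ⟨a * c, b * d, fun h => ?_, ?_⟩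
  · rcases (Int.Prime.dvd_mul' (by exact_mod_cast hp) h) with h1 | h1
    exacts [hb h1, hd h1]
  · push_cast
    calc (q * r) * (b * d) = (q * b) * (r * d) := by ring
    _ = (a : ℚ) * c := by rw [hab, hcd]

private lemma isPI_sub {p : ℕ} (hp : p.Prime) {q r : ℚ} (hq : IsPI p q) (hr : IsPI p r) :
    IsPI p (q - r) := by
  rw [sub_eq_add_neg]; exact isPI_add hp hq (isPI_neg hr)

private lemma isPI_sum {p : ℕ} (hp : p.Prime) {s : Finset ℕ} {f : ℕ → ℚ}
    (h : ∀ i ∈ s, IsPI p (f i)) : IsPI p (∑ i ∈ s, f i) := by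
  classical
  induction s using Finset.induction_on with
  | empty => simpa using isPI_zero hp
  | insert _ _ hx ih =>
    rw [Finset.sum_insert hx]
    exact isPI_add hp (h _ (Finset.mem_insert_self _ _))
      (ih fun i hi => h i (Finset.mem_insert_of_mem hi))

private lemma isPI_den {p : ℕ} (hp : p.Prime) {q : ℚ} (h : IsPI p q) : ¬ p ∣ q.den := by
  obtain ⟨a, b, hb, hab⟩ := h
  have hb0 : b ≠ 0 := fun h0 => hb (h0 ▸ dvd_zero _)
  have hq : q = (a : ℚ) / (b : ℚ) := by
    field_simp [hb0] at hab ⊢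
    exact_mod_cast hab
  have hdvd : (q.den : ℤ) ∣ b := by
    rw [hq, ← Rat.divInt_eq_div]
    exact Rat.den_dvd a b
  intro hpd
  exact hb (dvd_trans (Int.natCast_dvd_natCast.2 hpd) hdvd)

private lemma two_pow_ge (e : ℕ) (he : 2 ≤ e) : e + 2 ≤ 2 ^ e := by
  induction e with
  | zero => omega
  | succ n ih =>
    rcases Nat.lt_or_ge n 2 with h | h
    · interval_cases n <;> omega
    · have := ih (by omega)
      have h2 : 2 ^ n ≥ 1 := Nat.one_le_two_pow
      calc n + 1 + 2 ≤ 2 ^ n + 2 ^ n := by omega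
      _ = 2 ^ (n + 1) := by ring

private lemma fact_le {p m : ℕ} (hp : p.Prime) (hm : 2 ≤ m) (hne : ¬(p = 2 ∧ m = 2)) :
    m.factorization p ≤ m - 2 := by
  set e := m.factorization p with he
  have hdvd : p ^ e ∣ m := Nat.ordProj_dvd m p
  have hle : p ^ e ≤ m := Nat.le_of_dvd (by omega) hdvd
  rcases Nat.lt_or_ge e 1 with h | h
  · omega
  rcases Nat.lt_or_ge e 2 with h2 | h2
  · have he1 : e = 1 := by omega
    rw [he1]
    have hpm : p ∣ m := by
      have := he1 ▸ hdvd; rwa [pow_one] at this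
    rcases Nat.lt_or_ge p 3 with hp2 | hp3
    · have hp2' : p = 2 := by have := hp.two_le; omega
      subst hp2'
      have hm2 : m ≠ 2 := fun h => hne ⟨rfl, h⟩
      omega
    · have : p ≤ m := Nat.le_of_dvd (by omega) hpm
      omega
  · have h1 : 2 ^ e ≤ p ^ e := Nat.pow_le_pow_left hp.two_le e
    have h2' := two_pow_ge e h2
    omega

private lemma isPI_ppow_div {p : ℕ} (hp : p.Prime) {j m : ℕ} (hm : m ≠ 0)
    (h : m.factorization p ≤ j) : IsPI p ((p : ℚ) ^ j / (m : ℚ)) := by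
  set e := m.factorization p with he
  set u := m / p ^ e with hu
  have hmu : p ^ e * u = m := Nat.ordProj_mul_ordCompl_eq_self m p
  have hpu : ¬ p ∣ u := Nat.not_dvd_ordCompl hp hm
  refine ⟨(p : ℤ) ^ (j - e), (u : ℤ), by exact_mod_cast hpu, ?_⟩
  have hu0 : (u : ℚ) ≠ 0 := by
    have : u ≠ 0 := by
      intro h0; rw [h0, mul_zero] at hmu; exact hm hmu.symm
    exact_mod_cast this
  have hp0 : (p : ℚ) ≠ 0 := by exact_mod_cast hp.ne_zero
  have hm0 : (m : ℚ) ≠ 0 := by exact_mod_cast hm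
  have hmq : (m : ℚ) = (p : ℚ) ^ e * u := by exact_mod_cast hmu.symm
  have hj : (p : ℚ) ^ j = (p : ℚ) ^ (j - e) * (p : ℚ) ^ e := by
    rw [← pow_add]; congr 1; omega
  push_cast
  rw [hmq, hj]
  field_simp

private lemma sum_pow_mod {p : ℕ} (hp : p.Prime) {k : ℕ} (hk : k ≠ 0) :
    ((∑ x ∈ range p, x ^ k : ℕ) : ZMod p) = if (p - 1) ∣ k then -1 else 0 := by
  haveI : Fact p.Prime := ⟨hp⟩
  have h1 : ((∑ x ∈ range p, x ^ k : ℕ) : ZMod p) = ∑ x ∈ range p, ((x : ZMod p)) ^ k := by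
    push_cast; rfl
  have h2 : ∑ x ∈ range p, ((x : ZMod p)) ^ k = ∑ x : ZMod p, x ^ k := by
    apply Finset.sum_nbij' (i := fun x : ℕ => (x : ZMod p)) (j := fun x : ZMod p => x.val)
    · intro a _; exact Finset.mem_univ _
    · intro a _; exact Finset.mem_range.2 (ZMod.val_lt a)
    · intro a ha; exact ZMod.val_cast_of_lt (Finset.mem_range.1 ha)
    · intro a _; exact ZMod.natCast_zmod_val a
    · intro a _; rfl
  have h3 : ∑ x : ZMod p, x ^ k = ∑ x : (ZMod p)ˣ, ((x : ZMod p)) ^ k := by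
    classical
    let φ : (ZMod p)ˣ ↪ ZMod p := ⟨fun x => x, Units.val_injective⟩
    have huniv : Finset.univ.map φ = Finset.univ \ {0} := by
      ext x
      simp only [Finset.mem_map, Finset.mem_univ, Function.Embedding.coeFn_mk, true_and,
        Finset.mem_sdiff, Finset.mem_singleton, φ]
      exact isUnit_iff_ne_zero (a := x)
    calc
      ∑ x : ZMod p, x ^ k = ∑ x ∈ Finset.univ \ {(0 : ZMod p)}, x ^ k := by
        rw [← Finset.sum_sdiff (Finset.subset_univ {(0 : ZMod p)}), Finset.sum_singleton,
          zero_pow hk, add_zero]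
      _ = ∑ x : (ZMod p)ˣ, ((x : ZMod p)) ^ k := by
        rw [← huniv, Finset.sum_map]; rfl
  have h4 := FiniteField.sum_pow_units (ZMod p) k
  rw [ZMod.card] at h4
  rw [h1, h2, h3, h4]

private lemma choose_id {k i : ℕ} (hi : i ≤ k) :
    (k + 1).choose i * (k + 1 - i) = k.choose i * (k + 1) := by
  have h1 := Nat.add_one_mul_choose_eq k (k - i)
  have h2 : k.choose (k - i) = k.choose i := Nat.choose_symm hi
  have h4 : (k + 1).choose (k + 1 - i) = (k + 1).choose i := by
    have := Nat.choose_symm (show i ≤ k + 1 by omega)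
    exact this
  rw [h2, show k - i + 1 = k + 1 - i from by omega, h4] at h1
  rw [mul_comm (k.choose i) (k + 1)]
  exact h1.symm

private lemma bernoulli_odd_zero {i : ℕ} (h : Odd i) (hi : 1 < i) : bernoulli i = 0 := by
  rw [bernoulli_eq_bernoulli'_of_ne_one (by omega)]
  exact bernoulli'_eq_zero_of_odd h hi

private lemma bernoulli_key :
    ∀ k p : ℕ, p.Prime → Even k → 0 < k →
      ((p - 1) ∣ k → IsPI p (bernoulli k + 1 / (p : ℚ))) ∧
      (¬ (p - 1) ∣ k → IsPI p (bernoulli k)) := by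
  intro k
  induction k using Nat.strong_induction_on with
  | _ k IH =>
    intro p hp hk hk0
    have hp0 : (p : ℚ) ≠ 0 := by exact_mod_cast hp.ne_zero
    -- `p * B_i` is a p-adic integer for all i < k
    have hPB : ∀ i < k, IsPI p ((p : ℚ) * bernoulli i) := by
      intro i hi
      rcases Nat.eq_zero_or_pos i with rfl | hi0
      · rw [bernoulli_zero, mul_one]
        exact isPI_natCast hp p
      rcases eq_or_ne i 1 with rfl | hi1
      · rw [bernoulli_one]
        by_cases hp2 : p = 2
        · subst hp2
          have h2 : ((2 : ℕ) : ℚ) * (-1 / 2) = ((-1 : ℤ) : ℚ) := by norm_num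
          rw [h2]
          exact isPI_intCast hp _
        · refine ⟨-(p : ℤ), 2, fun h => ?_, ?_⟩
          · have h2 : p ∣ 2 := by exact_mod_cast h
            have h3 := Nat.le_of_dvd (by norm_num) h2
            have h4 := hp.two_le
            omega
          · push_cast; ring
      rcases Nat.even_or_odd i with hie | hio
      · -- i even, 2 ≤ i : use induction hypothesis
        have hIH := IH i hi p hp hie hi0
        by_cases hdvd : (p - 1) ∣ i
        · have h1 := hIH.1 hdvd
          have heq : (p : ℚ) * bernoulli i
              = (p : ℚ) * (bernoulli i + 1 / p) + ((-1 : ℤ) : ℚ) := by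
            field_simp
            ring
          rw [heq]
          exact isPI_add hp (isPI_mul hp (isPI_natCast hp p) h1) (isPI_intCast hp _)
        · exact isPI_mul hp (isPI_natCast hp p) (hIH.2 hdvd)
      · -- i odd ≥ 3
        rw [bernoulli_odd_zero hio (by omega), mul_zero]
        exact isPI_zero hp
    -- Faulhaber identity at n = p
    set N : ℕ := ∑ x ∈ range p, x ^ k with hN
    set f : ℕ → ℚ :=
      fun i => bernoulli i * ((k + 1).choose i : ℚ) * (p : ℚ) ^ (k + 1 - i) / ((k : ℚ) + 1)
      with hf
    have hsum : (N : ℚ) = ∑ i ∈ range (k + 1), f i := by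
      have h := sum_range_pow p k
      have hcast : (N : ℚ) = ∑ x ∈ range p, (x : ℚ) ^ k := by rw [hN]; push_cast; ring
      rw [hcast, h]
    have hfk : f k = (p : ℚ) * bernoulli k := by
      simp only [hf]
      rw [Nat.choose_succ_self_right, show k + 1 - k = 1 from by omega]
      push_cast
      field_simp
    have hNk : (p : ℚ) * bernoulli k = (N : ℚ) - ∑ i ∈ range k, f i := by
      rw [hsum, Finset.sum_range_succ, hfk]; ring
    -- each f i (i < k) is p times a p-adic integer
    have hdiv : ∀ i ∈ range k, IsPI p (f i / p) := by
      intro i hi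
      have hik : i < k := Finset.mem_range.1 hi
      set m : ℕ := k + 1 - i with hm
      have hm2 : 2 ≤ m := by omega
      by_cases hB : bernoulli i = 0
      · simp only [hf, hB, zero_mul, mul_zero, zero_div]
        simpa using isPI_zero hp
      by_cases hpm : p = 2 ∧ m = 2
      · -- exceptional case: p = 2, i = k - 1; then i is odd, so i = 1, k = 2
        obtain ⟨hp2, hm2'⟩ := hpm
        have hik1 : i = k - 1 := by omega
        have hio : Odd i := by
          rcases hk with ⟨t, ht⟩
          refine Nat.odd_iff.2 ?_
          omega
        have hi1 : i = 1 := by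
          by_contra h1
          exact hB (bernoulli_odd_zero hio (by
            rcases Nat.odd_iff.1 hio with h
            omega))
        have hk2 : k = 2 := by omega
        subst hp2; subst hi1; subst hk2
        have hval : f 1 / ((2 : ℕ) : ℚ) = ((-1 : ℤ) : ℚ) := by
          simp only [hf, bernoulli_one]
          norm_num
        rw [hval]
        exact isPI_intCast hp _
      · -- main case
        have hfac : m.factorization p ≤ m - 2 := fact_le hp hm2 hpm
        have hCq : ((k + 1).choose i : ℚ) = (k.choose i : ℚ) * ((k : ℚ) + 1) / (m : ℚ) := by
          rw [eq_div_iff (show (m : ℚ) ≠ 0 from by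
            have : m ≠ 0 := by omega
            exact_mod_cast this)]
          exact_mod_cast choose_id hik.le
        have hpow : (p : ℚ) ^ (k + 1 - i) = (p : ℚ) ^ (m - 2) * p * p := by
          rw [show k + 1 - i = m - 2 + 2 from by omega, pow_add]
          ring
        have hm0 : (m : ℚ) ≠ 0 := by
          have : m ≠ 0 := by omega
          exact_mod_cast this
        have hk1 : ((k : ℚ) + 1) ≠ 0 := by positivity
        have key : f i / p
            = ((p : ℚ) * bernoulli i) * ((k.choose i : ℕ) : ℚ) * ((p : ℚ) ^ (m - 2) / m) := by
          simp only [hf, hCq, hpow]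
          field_simp
        rw [key]
        exact isPI_mul hp (isPI_mul hp (hPB i hik) (isPI_natCast hp _))
          (isPI_ppow_div hp (by omega) hfac)
    -- value of N mod p
    have hmod := sum_pow_mod hp (k := k) (by omega)
    rw [← hN] at hmod
    constructor
    · intro hdvd'
      rw [if_pos hdvd'] at hmod
      have : ((N + 1 : ℕ) : ZMod p) = 0 := by push_cast; rw [hmod]; ring
      obtain ⟨c, hc⟩ := (ZMod.natCast_eq_zero_iff _ _).1 this
      have hcq : (N : ℚ) + 1 = (p : ℚ) * c := by exact_mod_cast congrArg (Nat.cast : ℕ → ℚ) hc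
      have heq : bernoulli k + 1 / (p : ℚ) = (c : ℚ) - ∑ i ∈ range k, f i / p := by
        rw [← Finset.sum_div]
        apply mul_left_cancel₀ hp0
        rw [mul_sub, mul_add, mul_one_div, div_self hp0, ← mul_div_assoc,
          mul_div_cancel_left₀ _ hp0]
        linarith [hNk, hcq]
      rw [heq]
      exact isPI_sub hp (isPI_natCast hp c) (isPI_sum hp hdiv)
    · intro hdvd'
      rw [if_neg hdvd'] at hmod
      obtain ⟨c, hc⟩ := (ZMod.natCast_eq_zero_iff _ _).1 hmod
      have hcq : (N : ℚ) = (p : ℚ) * c := by exact_mod_cast congrArg (Nat.cast : ℕ → ℚ) hc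
      have heq : bernoulli k = (c : ℚ) - ∑ i ∈ range k, f i / p := by
        rw [← Finset.sum_div]
        apply mul_left_cancel₀ hp0
        rw [mul_sub, ← mul_div_assoc, mul_div_cancel_left₀ _ hp0]
        linarith [hNk, hcq]
      rw [heq]
      exact isPI_sub hp (isPI_natCast hp c) (isPI_sum hp hdiv)

/-- For every even `k > 0` and every prime `p` : if `p - 1 ∣ k` then `B_k + 1/p`
is a `p`-adic integer (its denominator is prime to `p`), and otherwise `B_k`
itself is a `p`-adic integer. -/
theorem bernoulli_padic_integrality (k p : ℕ) (hk : Even k) (hk0 : 0 < k)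
    (hp : p.Prime) :
    ((p - 1) ∣ k → ¬ p ∣ (bernoulli k + 1 / (p : ℚ)).den) ∧
    (¬ (p - 1) ∣ k → ¬ p ∣ (bernoulli k).den) := by
  have h := bernoulli_key k p hp hk hk0
  exact ⟨fun hd => isPI_den hp (h.1 hd), fun hd => isPI_den hp (h.2 hd)⟩
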